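/- Let α be a real symmetric positive definite 2s×2s matrix, defining an inner product α(z,z') = zᵀαz' on the symplectic space (ℝ^{2s}, Δ). Then there exists a symplectic matrix T (i.e., a real 2s×2s matrix with TᵀΔT = Δ) and positive real numbers α₁, …, α_s such that TᵀαT is the diagonal matrix diag(α₁, α₁, α₂, α₂, …, α_s, α_s). -/

import Mathlib

set_option maxHeartbeats 1000000

open Matrix Module
open scoped InnerProductSpace
open scoped MatrixOrder

/-- The standard symplectic matrix `Δ` of a system of `s` modes: block-diagonal
with `s` copies of the 2×2 block `[[0,1],[-1,0]]`. -/
noncomputable def Sympl (s : ℕ) : Matrix (Fin 2 × Fin s) (Fin 2 × Fin s) ℝ :=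
  Matrix.blockDiagonal (fun _ => !![0, 1; -1, 0])


lemma skew_adapted_family {E : Type*} [NormedAddCommGroup E] [InnerProductSpace ℝ E]
    [FiniteDimensional ℝ E] (f : E →ₗ[ℝ] E)
    (hskew : ∀ x y : E, ⟪f x, y⟫_ℝ = -⟪x, f y⟫_ℝ)
    (hinj : ∀ x : E, x ≠ 0 → f x ≠ 0) :
    ∀ (s : ℕ) (V : Submodule ℝ E), (∀ v ∈ V, f v ∈ V) → finrank ℝ V = 2 * s →
    ∃ b : Fin 2 × Fin s → E, (∀ p, b p ∈ V) ∧ Orthonormal ℝ b ∧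
      ∃ d : Fin s → ℝ, (∀ j, 0 < d j) ∧
        (∀ j, f (b (0, j)) = (-(d j)) • b (1, j)) ∧ (∀ j, f (b (1, j)) = d j • b (0, j)) := by
  intro s
  induction s with
  | zero =>
    intro V _ _
    exact ⟨fun p => p.2.elim0, fun p => p.2.elim0,
      orthonormal_iff_ite.2 (fun p => p.2.elim0), fun j => j.elim0,
      fun j => j.elim0, fun j => j.elim0, fun j => j.elim0⟩
  | succ s IH =>
    intro V hV hrank
    -- the symmetric operator `f ∘ f` restricted to `V`
    have hV2 : ∀ x ∈ V, (f ∘ₗ f) x ∈ V := fun x hx => hV _ (hV _ hx)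
    set g : V →ₗ[ℝ] V := (f ∘ₗ f).restrict hV2 with hg
    have hgsym : g.IsSymmetric := by
      intro x y
      have h1 : ((g x : E)) = f (f (x : E)) := rfl
      have h2 : ((g y : E)) = f (f (y : E)) := rfl
      simp only [Submodule.coe_inner, h1, h2]
      linarith [hskew (f (x : E)) ((y : E)), hskew ((x : E)) (f (y : E))]
    -- an eigenvector
    have hfr : finrank ℝ V = 2 * (s + 1) := hrank
    set i0 : Fin (2 * (s + 1)) := ⟨0, by omega⟩ with hi0
    set μ : ℝ := hgsym.eigenvalues hfr i0 with hμ
    have hev := hgsym.hasEigenvector_eigenvectorBasis hfr i0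
    set v0 : V := hgsym.eigenvectorBasis hfr i0 with hv0
    have hgv : g v0 = μ • v0 := hev.apply_eq_smul
    have hv0ne : v0 ≠ 0 := hev.2
    set v : E := (v0 : E) with hvdef
    have hvne : v ≠ 0 := fun h => hv0ne (Subtype.ext h)
    have hvV : v ∈ V := v0.2
    have hffv : f (f v) = μ • v := by
      have := congrArg (Subtype.val) hgv
      exact this
    set w : E := f v with hw
    have hwne : w ≠ 0 := hinj v hvne
    have hwV : w ∈ V := hV v hvV
    -- ⟪v, w⟫ = 0
    have hvw : ⟪v, w⟫_ℝ = 0 := by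
      show ⟪v, f v⟫_ℝ = 0
      have h := hskew v v
      have h2 := real_inner_comm (f v) v
      linarith
    have hnw : ‖w‖ ^ 2 = -μ * ‖v‖ ^ 2 := by
      have h1 : ⟪f w, v⟫_ℝ = -⟪w, f v⟫_ℝ := hskew w v
      have h2 : ⟪w, f v⟫_ℝ = ⟪w, w⟫_ℝ := rfl
      rw [hffv, real_inner_smul_left, h2] at h1
      rw [← real_inner_self_eq_norm_sq, ← real_inner_self_eq_norm_sq]
      linarith
    have hμneg : μ < 0 := by
      have h1 : (0:ℝ) < ‖w‖ ^ 2 := pow_pos (norm_pos_iff.mpr hwne) 2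
      have h2 : (0:ℝ) < ‖v‖ ^ 2 := pow_pos (norm_pos_iff.mpr hvne) 2
      nlinarith
    clear_value w v v0 μ i0
    clear hgv hev hi0 hμ hv0 hvdef hgsym hg g
    -- normalized orthonormal pair e, u
    have hnv : ‖v‖ ≠ 0 := norm_ne_zero_iff.mpr hvne
    have hnwn : ‖w‖ ≠ 0 := norm_ne_zero_iff.mpr hwne
    set e : E := ‖v‖⁻¹ • v with he
    set u : E := ‖w‖⁻¹ • w with hu
    have hee : ⟪e, e⟫_ℝ = 1 := by
      rw [he, real_inner_smul_left, real_inner_smul_right, real_inner_self_eq_norm_sq]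
      field_simp
    have huu : ⟪u, u⟫_ℝ = 1 := by
      rw [hu, real_inner_smul_left, real_inner_smul_right, real_inner_self_eq_norm_sq]
      field_simp
    have heu : ⟪e, u⟫_ℝ = 0 := by
      rw [he, hu, real_inner_smul_left, real_inner_smul_right, hvw]
      ring
    have heu' : ⟪u, e⟫_ℝ = 0 := by rw [real_inner_comm]; exact heu
    have hen : ‖e‖ = 1 := by rw [norm_eq_sqrt_real_inner, hee, Real.sqrt_one]
    have hun : ‖u‖ = 1 := by rw [norm_eq_sqrt_real_inner, huu, Real.sqrt_one]
    have heV : e ∈ V := V.smul_mem _ hvV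
    have huV : u ∈ V := V.smul_mem _ hwV
    set d0 : ℝ := ‖w‖ / ‖v‖ with hd0
    have hd0pos : 0 < d0 := div_pos (norm_pos_iff.mpr hwne) (norm_pos_iff.mpr hvne)
    have hfe : f e = d0 • u := by
      rw [he, LinearMap.map_smul]
      have hfv : f v = w := hw.symm
      rw [hfv, hu, smul_smul, hd0]
      congr 1
      field_simp
    have hfu : f u = (-d0) • e := by
      rw [hu, LinearMap.map_smul]
      have hfw : f w = μ • v := hffv
      rw [hfw, he, smul_smul, smul_smul, hd0]
      congr 1
      have hnw' : ‖w‖ * ‖w‖ = -μ * (‖v‖ * ‖v‖) := by nlinarith [hnw]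
      field_simp
      nlinarith [hnw']
    -- the span of the pair
    have honp : Orthonormal ℝ ![e, u] := by
      rw [orthonormal_iff_ite]
      intro i j
      fin_cases i <;> fin_cases j <;>
        simp [hee, huu, heu, heu', hen, hun]
    set U : Submodule ℝ E := Submodule.span ℝ (Set.range ![e, u]) with hU
    have heU : e ∈ U := Submodule.subset_span ⟨0, rfl⟩
    have huU : u ∈ U := Submodule.subset_span ⟨1, rfl⟩
    have hUV : U ≤ V := by
      rw [hU, Submodule.span_le]
      rintro x ⟨i, rfl⟩
      fin_cases i
      · exact heV
      · exact huV
    have hUrank : finrank ℝ U = 2 := by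
      rw [hU, finrank_span_eq_card honp.linearIndependent]
      simp
    set W : Submodule ℝ E := Uᗮ ⊓ V with hW
    have hWrank : finrank ℝ W = 2 * s := by
      have h := Submodule.finrank_add_inf_finrank_orthogonal hUV
      rw [hUrank, hrank, ← hW] at h
      omega
    have hWinv : ∀ x ∈ W, f x ∈ W := by
      rintro x hx
      have hxo : x ∈ Uᗮ := (Submodule.mem_inf.mp hx).1
      have hxV : x ∈ V := (Submodule.mem_inf.mp hx).2
      refine Submodule.mem_inf.mpr ⟨?_, hV x hxV⟩
      rw [Submodule.mem_orthogonal]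
      intro y hy
      have hUperp : ∀ z ∈ U, ⟪z, x⟫_ℝ = 0 := (Submodule.mem_orthogonal U x).1 hxo
      have hkey_e : ⟪e, f x⟫_ℝ = 0 := by
        have h1 := hskew e x
        rw [hfe, real_inner_smul_left] at h1
        rw [hUperp u huU] at h1
        linarith
      have hkey_u : ⟪u, f x⟫_ℝ = 0 := by
        have h1 := hskew u x
        rw [hfu, real_inner_smul_left] at h1
        rw [hUperp e heU] at h1
        linarith
      induction hy using Submodule.span_induction with
      | mem z hz =>
        obtain ⟨i, rfl⟩ := hz
        fin_cases i
        · exact hkey_e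
        · exact hkey_u
      | zero => simp
      | add z₁ z₂ _ _ h1 h2 => rw [inner_add_left, h1, h2]; ring
      | smul c z _ h1 => rw [real_inner_smul_left, h1]; ring
    obtain ⟨b', hb'mem, hb'on, d', hd'pos, hrel1', hrel2'⟩ := IH W hWinv hWrank
    have hb'perp : ∀ p, b' p ∈ Uᗮ := fun p => (hb'mem p).1
    have hb'V : ∀ p, b' p ∈ V := fun p => (hb'mem p).2
    have hperp_pair : ∀ (z : E), z ∈ U → ∀ p, ⟪z, b' p⟫_ℝ = 0 := by
      intro z hz p
      exact (Submodule.mem_orthogonal U (b' p)).1 (hb'perp p) z hz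
    refine ⟨fun p => Fin.cases (![u, e] p.1) (fun j => b' (p.1, j)) p.2, ?_, ?_, ?_⟩
    · rintro ⟨i, j⟩
      induction j using Fin.cases with
      | zero =>
        simp only [Fin.cases_zero]
        fin_cases i
        · exact huV
        · exact heV
      | succ j => simpa using hb'V (i, j)
    · rw [orthonormal_iff_ite]
      rintro ⟨i, j⟩ ⟨i', j'⟩
      induction j using Fin.cases with
      | zero =>
        induction j' using Fin.cases with
        | zero =>
          simp only [Fin.cases_zero]
          fin_cases i <;> fin_cases i' <;>
            simp [hee, huu, heu, heu', Prod.ext_iff, hen, hun]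
        | succ j' =>
          simp only [Fin.cases_zero, Fin.cases_succ]
          have h0 : ⟪![u, e] i, b' (i', j')⟫_ℝ = 0 := by
            fin_cases i
            · exact hperp_pair u huU _
            · exact hperp_pair e heU _
          rw [h0]
          have hne : ((i, (0 : Fin (s+1))) : Fin 2 × Fin (s+1)) ≠ (i', Fin.succ j') :=
            fun h => Fin.succ_ne_zero j' ((Prod.ext_iff.1 h).2.symm)
          rw [if_neg hne]
      | succ j =>
        induction j' using Fin.cases with
        | zero =>
          simp only [Fin.cases_zero, Fin.cases_succ]
          have h0 : ⟪b' (i, j), ![u, e] i'⟫_ℝ = 0 := by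
            rw [real_inner_comm]
            fin_cases i'
            · exact hperp_pair u huU _
            · exact hperp_pair e heU _
          rw [h0]
          have hne : ((i, Fin.succ j) : Fin 2 × Fin (s+1)) ≠ (i', (0 : Fin (s+1))) :=
            fun h => Fin.succ_ne_zero j ((Prod.ext_iff.1 h).2)
          rw [if_neg hne]
        | succ j' =>
          simp only [Fin.cases_succ]
          rw [orthonormal_iff_ite.1 hb'on (i, j) (i', j')]
          simp [Prod.ext_iff, Fin.succ_inj]
    · refine ⟨Fin.cases d0 d', ?_, ?_, ?_⟩
      · intro j
        induction j using Fin.cases with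
        | zero => simpa using hd0pos
        | succ j => simpa using hd'pos j
      · intro j
        induction j using Fin.cases with
        | zero =>
          simp only [Fin.cases_zero]
          show f u = -d0 • e
          rw [hfu]
        | succ j =>
          simp only [Fin.cases_succ]
          exact hrel1' j
      · intro j
        induction j using Fin.cases with
        | zero =>
          simp only [Fin.cases_zero]
          show f e = d0 • u
          exact hfe
        | succ j =>
          simp only [Fin.cases_succ]
          exact hrel2' j

lemma skew_matrix_normal_form {s : ℕ} (M : Matrix (Fin 2 × Fin s) (Fin 2 × Fin s) ℝ)
    (hM : Mᵀ = -M) (hMdet : IsUnit M.det) :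
    ∃ O : Matrix (Fin 2 × Fin s) (Fin 2 × Fin s) ℝ, Oᵀ * O = 1 ∧
      ∃ d : Fin s → ℝ, (∀ j, 0 < d j) ∧
        Oᵀ * M * O = Matrix.blockDiagonal (fun j => d j • !![0, 1; -1, 0]) := by
  classical
  set f : EuclideanSpace ℝ (Fin 2 × Fin s) →ₗ[ℝ] EuclideanSpace ℝ (Fin 2 × Fin s) :=
    Matrix.toEuclideanLin M with hf
  have happ : ∀ (x : EuclideanSpace ℝ (Fin 2 × Fin s)) (p), f x p = (M *ᵥ (fun q => x q)) p := fun x p => rfl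
  have hip : ∀ (x y : EuclideanSpace ℝ (Fin 2 × Fin s)), ⟪x, y⟫_ℝ = ∑ p, x p * y p := by
    intro x y
    simp [PiLp.inner_apply, RCLike.inner_apply, conj_trivial]
    exact Finset.sum_congr rfl fun _ _ => mul_comm _ _
  have hskew : ∀ x y : EuclideanSpace ℝ (Fin 2 × Fin s), ⟪f x, y⟫_ℝ = -⟪x, f y⟫_ℝ := by
    intro x y
    rw [hip, hip]
    have h1 : ∑ p, f x p * y p = (M *ᵥ (fun q => x q)) ⬝ᵥ (fun q => y q) := by
      simp [happ, dotProduct]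
    have h2 : ∑ p, x p * f y p = (fun q => x q) ⬝ᵥ (M *ᵥ (fun q => y q)) := by
      simp [happ, dotProduct]
    rw [h1, h2, dotProduct_mulVec, ← mulVec_transpose, hM]
    simp [dotProduct, neg_mulVec, Finset.mul_sum, Finset.sum_mul]
  have hinj : ∀ x : EuclideanSpace ℝ (Fin 2 × Fin s), x ≠ 0 → f x ≠ 0 := by
    intro x hx hfx
    apply hx
    have h0 : M *ᵥ (fun q => x q) = 0 := by
      funext p
      have := congrFun (congrArg (fun (z : EuclideanSpace ℝ (Fin 2 × Fin s)) => (fun q => z q)) hfx) p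
      simpa [happ] using this
    have : (fun q => x q) = 0 := by
      have h1 := congrArg (fun v => M⁻¹ *ᵥ v) h0
      dsimp only at h1
      rwa [mulVec_mulVec, Matrix.nonsing_inv_mul M hMdet, one_mulVec, mulVec_zero] at h1
    ext p
    simpa using congrFun this p
  have hrank : finrank ℝ (⊤ : Submodule ℝ (EuclideanSpace ℝ (Fin 2 × Fin s))) = 2 * s := by
    rw [finrank_top, finrank_euclideanSpace]
    simp [Fintype.card_prod]
  obtain ⟨b, -, hbon, d, hdpos, hrel1, hrel2⟩ :=
    skew_adapted_family f hskew hinj s ⊤ (fun v _ => trivial) hrank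
  refine ⟨Matrix.of (fun p q => b q p), ?_, d, hdpos, ?_⟩
  · ext p q
    have := orthonormal_iff_ite.1 hbon p q
    rw [hip] at this
    simp only [Matrix.mul_apply, Matrix.transpose_apply, Matrix.of_apply, Matrix.one_apply]
    rw [this]
  · ext p q
    obtain ⟨i, j⟩ := p
    obtain ⟨i', j'⟩ := q
    have hentry : (Matrix.of (fun p q => b q p))ᵀ * M * (Matrix.of (fun p q => b q p)) =
        Matrix.of (fun p q => ⟪b p, f (b q)⟫_ℝ) := by
      ext p q
      rw [Matrix.of_apply, hip]
      have hfk : ∀ k, f (b q) k = ∑ l, M k l * b q l := fun k => rfl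
      simp only [Matrix.mul_apply, Matrix.transpose_apply, Matrix.of_apply, hfk,
        Finset.sum_mul, Finset.mul_sum]
      rw [Finset.sum_comm]
      refine Finset.sum_congr rfl fun l _ => Finset.sum_congr rfl fun k _ => by ring
    rw [hentry]
    rw [Matrix.of_apply, Matrix.blockDiagonal_apply]
    fin_cases i <;> fin_cases i' <;> simp only [Fin.zero_eta, Fin.mk_one] <;>
      [ rw [hrel1 j', real_inner_smul_right, orthonormal_iff_ite.1 hbon];
        rw [hrel2 j', real_inner_smul_right, orthonormal_iff_ite.1 hbon];
        rw [hrel1 j', real_inner_smul_right, orthonormal_iff_ite.1 hbon];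
        rw [hrel2 j', real_inner_smul_right, orthonormal_iff_ite.1 hbon]] <;>
      by_cases hjj : j = j' <;>
      simp [hjj, Prod.ext_iff]

/-- For every real symmetric positive definite matrix `α` on the
symplectic space `(ℝ^{2s}, Δ)` there is a symplectic matrix `T` (`TᵀΔT = Δ`) and
positive reals `α₁, …, α_s` such that `TᵀαT = diag(α₁, α₁, …, α_s, α_s)`. -/
theorem exists_symplectic_diagonalization (s : ℕ)
    (α : Matrix (Fin 2 × Fin s) (Fin 2 × Fin s) ℝ) (hα : α.PosDef) :
    ∃ T : Matrix (Fin 2 × Fin s) (Fin 2 × Fin s) ℝ,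
      Tᵀ * Sympl s * T = Sympl s ∧
      ∃ a : Fin s → ℝ, (∀ j, 0 < a j) ∧
        Tᵀ * α * T = Matrix.diagonal (fun p => a p.2) := by
  classical
  set R := CFC.sqrt α with hRdef
  have hRps : R.PosSemidef := (CFC.sqrt_nonneg α).posSemidef
  have hRH : R.IsHermitian := hRps.1
  have hRT : Rᵀ = R := hRH
  have hRR : R * R = α := CFC.sqrt_mul_sqrt_self α hα.posSemidef.nonneg
  have hRdet : IsUnit R.det := by
    have h1 : R.det * R.det = α.det := by rw [← det_mul, hRR]
    have h2 : α.det ≠ 0 := ne_of_gt hα.det_pos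
    have h3 : R.det ≠ 0 := fun h => h2 (by rw [← h1, h]; ring)
    exact h3.isUnit
  set S := R⁻¹ with hSdef
  have hST : Sᵀ = S := by rw [hSdef, transpose_nonsing_inv, hRT]
  have hSR : S * R = 1 := Matrix.nonsing_inv_mul R hRdet
  have hRS : R * S = 1 := Matrix.mul_nonsing_inv R hRdet
  have hSdet : IsUnit S.det :=
    IsUnit.of_mul_eq_one (a := S.det) R.det (by rw [← det_mul, hSR, det_one])
  have hΔT : (Sympl s)ᵀ = -(Sympl s) := by
    ext p q
    obtain ⟨i, j⟩ := p
    obtain ⟨i', j'⟩ := q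
    simp only [Sympl, transpose_apply, blockDiagonal_apply, Matrix.neg_apply]
    by_cases h : j = j'
    · subst h
      simp only [if_pos rfl]
      fin_cases i <;> fin_cases i' <;> simp
    · simp [h, Ne.symm h]
  have hΔdet : IsUnit (Sympl s).det := by
    have : (Sympl s).det = 1 := by
      rw [Sympl, det_blockDiagonal]
      have : (!![0, 1; -1, 0] : Matrix (Fin 2) (Fin 2) ℝ).det = 1 := by
        rw [det_fin_two_of]; norm_num
      simp [this]
    rw [this]; exact isUnit_one
  set M := S * Sympl s * S with hMdef
  have hMT : Mᵀ = -M := by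
    rw [hMdef, transpose_mul, transpose_mul, hST, hΔT]
    simp only [Matrix.mul_neg, Matrix.neg_mul, Matrix.mul_assoc]
  have hMdet : IsUnit M.det := by
    have h : M.det = S.det * (Sympl s).det * S.det := by
      rw [hMdef, det_mul, det_mul]
    rw [h]
    exact (hSdet.mul hΔdet).mul hSdet
  obtain ⟨O, hOO, d, hdpos, hOMO⟩ := skew_matrix_normal_form M hMT hMdet
  set N : Matrix (Fin 2 × Fin s) (Fin 2 × Fin s) ℝ :=
    Matrix.diagonal (fun p => (Real.sqrt (d p.2))⁻¹) with hNdef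
  have hNT : Nᵀ = N := diagonal_transpose _
  refine ⟨S * O * N, ?_, fun j => (d j)⁻¹, fun j => inv_pos.mpr (hdpos j), ?_⟩
  · have key : (S * O * N)ᵀ * Sympl s * (S * O * N) = N * (Oᵀ * M * O) * N := by
      rw [transpose_mul, transpose_mul, hNT, hST, hMdef]
      simp only [Matrix.mul_assoc]
    rw [key, hOMO]
    ext p q
    obtain ⟨i, j⟩ := p
    obtain ⟨i', j'⟩ := q
    simp only [hNdef, Matrix.diagonal_mul, Matrix.mul_diagonal, blockDiagonal_apply,
      Matrix.smul_apply, smul_eq_mul, Sympl]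
    by_cases h : j = j'
    · subst h
      simp only [if_pos rfl]
      have hd := hdpos j
      have hs : Real.sqrt (d j) ≠ 0 := ne_of_gt (Real.sqrt_pos.mpr hd)
      have hss : Real.sqrt (d j) * Real.sqrt (d j) = d j := Real.mul_self_sqrt hd.le
      field_simp
      simp [Real.sq_sqrt hd.le]
    · simp [h]
  · have key : (S * O * N)ᵀ * α * (S * O * N) = N * (Oᵀ * (S * α * S) * O) * N := by
      rw [transpose_mul, transpose_mul, hNT, hST]
      simp only [Matrix.mul_assoc]
    have hSαS : S * α * S = 1 := by
      rw [← hRR, show S * (R * R) * S = (S * R) * (R * S) by simp only [Matrix.mul_assoc],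
        hSR, hRS, one_mul]
    rw [key, hSαS, Matrix.mul_one, hOO, Matrix.mul_one, hNdef, diagonal_mul_diagonal]
    have hfun : (fun p : Fin 2 × Fin s => (Real.sqrt (d p.2))⁻¹ * (Real.sqrt (d p.2))⁻¹) =
        fun p : Fin 2 × Fin s => (d p.2)⁻¹ :=
      funext fun p => by rw [← mul_inv, Real.mul_self_sqrt (hdpos p.2).le]
    rw [hfun]
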